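/- Let G be a finite abelian group with |G| ≥ 3. A zero-sum sequence A over G satisfies ρ(L(A)) = D(G)/2 if and only if there exist k, l ∈ ℕ and minimal zero-sum sequences U₁,…,U_k, V₁,…,V_l over G with |U₁| = … = |U_k| = D(G) and |V₁| = … = |V_l| = 2 such that A = U₁⋯U_k = V₁⋯V_l. -/

import Mathlib

def IsMinZS {G : Type*} [AddCommGroup G] (U : Multiset G) : Prop :=
  U ≠ 0 ∧ U.sum = 0 ∧ ∀ V ≤ U, V ≠ 0 → V.sum = 0 → V = U

noncomputable def DavC (G : Type*) [AddCommGroup G] : ℕ :=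
  sSup {n | ∃ U : Multiset G, IsMinZS U ∧ U.card = n}

def LSet {G : Type*} [AddCommGroup G] (A : Multiset G) : Set ℕ :=
  {k | ∃ l : Multiset (Multiset G), l.card = k ∧ (∀ U ∈ l, IsMinZS U) ∧ l.sum = A}

noncomputable def rhoSet (L : Set ℕ) : ℚ := ((sSup L : ℕ) : ℚ) / ((sInf L : ℕ) : ℚ)

def IsIntervalSet (L : Set ℕ) : Prop := L.Nonempty ∧ L = Set.Icc (sInf L) (sSup L)

section aux
variable {G : Type*} [AddCommGroup G]

lemma card_sum_eq (s : Multiset (Multiset G)) : s.sum.card = (s.map Multiset.card).sum := by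
  induction s using Multiset.induction_on with
  | empty => simp
  | cons a s ih => simp [ih]

lemma minZS_singleton_zero : IsMinZS ({0} : Multiset G) := by
  refine ⟨by simp, by simp, fun V hV hV0 _ => ?_⟩
  exact Multiset.eq_of_le_of_card_le hV (by
    rcases Multiset.exists_mem_of_ne_zero hV0 with ⟨x, hx⟩
    rw [Multiset.card_singleton]; exact Multiset.card_pos_iff_exists_mem.2 ⟨x, hx⟩)

lemma minZS_of_zero_mem {U : Multiset G} (hU : IsMinZS U) (h0 : (0:G) ∈ U) : U = {0} := by
  exact (hU.2.2 {0} (Multiset.singleton_le.2 h0) (by simp) (by simp)).symm ▸ rfl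

lemma card_pos_of_minZS {U : Multiset G} (hU : IsMinZS U) : 1 ≤ U.card :=
  Multiset.card_pos.2 hU.1

lemma two_le_card_of_minZS {U : Multiset G} (hU : IsMinZS U) (hne : U ≠ {0}) : 2 ≤ U.card := by
  rcases Nat.lt_or_ge U.card 2 with h | h
  · interval_cases h' : U.card
    · exact absurd (Multiset.card_eq_zero.1 h') hU.1
    · rcases Multiset.card_eq_one.1 h' with ⟨x, rfl⟩
      have : x = 0 := by simpa using hU.2.1
      exact absurd (by rw [this]) hne
  · exact h

/-- submultisets of a triple -/
lemma minZS_triple (a b c : G) (h : a + b + c = 0)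
    (ha : a ≠ 0) (hb : b ≠ 0) (hc : c ≠ 0)
    (hab : a + b ≠ 0) (hac : a + c ≠ 0) (hbc : b + c ≠ 0) :
    IsMinZS ({a, b, c} : Multiset G) := by
  refine ⟨by simp, by simpa [add_assoc] using h, fun V hV hV0 hVs => ?_⟩
  have hcard : V.card ≤ 3 := by simpa using Multiset.card_le_card hV
  rcases Nat.lt_or_ge V.card 3 with hlt | hge
  · exfalso
    interval_cases h' : V.card
    · exact hV0 (Multiset.card_eq_zero.1 h')
    · rcases Multiset.card_eq_one.1 h' with ⟨x, rfl⟩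
      have hx : x ∈ ({a, b, c} : Multiset G) := Multiset.singleton_le.1 hV
      have hxs : x = 0 := by simpa using hVs
      simp only [Multiset.insert_eq_cons, Multiset.mem_cons, Multiset.mem_singleton] at hx
      rcases hx with rfl | rfl | rfl <;> [exact ha hxs; exact hb hxs; exact hc hxs]
    · -- card 2
      classical
      have hsub : ({a, b, c} : Multiset G) - V + V = {a, b, c} := tsub_add_cancel_of_le hV
      have hc1 : (({a, b, c} : Multiset G) - V).card = 1 := by
        have h3 : (({a, b, c} : Multiset G) - V).card + V.card = 3 := by
          rw [← Multiset.card_add, hsub]; simp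
        omega
      rcases Multiset.card_eq_one.1 hc1 with ⟨x, hx⟩
      rw [hx] at hsub
      have hxmem : x ∈ ({a, b, c} : Multiset G) := by
        rw [← hsub]; simp
      have hcons : x ::ₘ V = ({a, b, c} : Multiset G) := by
        rw [← hsub, Multiset.singleton_add]
      simp only [Multiset.insert_eq_cons, Multiset.mem_cons, Multiset.mem_singleton] at hxmem
      have habc : ({a, b, c} : Multiset G) = a ::ₘ b ::ₘ c ::ₘ 0 := rfl
      rcases hxmem with hx1 | hx1 | hx1 <;> rw [hx1] at hcons
      · have hV2 : V = {b, c} := by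
          rw [habc] at hcons
          exact (Multiset.cons_inj_right a).mp hcons
        rw [hV2] at hVs; simp at hVs; exact hbc hVs
      · have hV2 : V = {a, c} := by
          rw [habc, Multiset.cons_swap] at hcons
          exact (Multiset.cons_inj_right b).mp hcons
        rw [hV2] at hVs; simp at hVs; exact hac hVs
      · have hV2 : V = {a, b} := by
          rw [habc, Multiset.cons_swap b c, Multiset.cons_swap a c] at hcons
          exact (Multiset.cons_inj_right c).mp hcons
        rw [hV2] at hVs; simp at hVs; exact hab hVs
  · exact Multiset.eq_of_le_of_card_le hV (by simpa using hge)

end aux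

section bound
variable {G : Type*} [AddCommGroup G]

lemma card_le_card_of_minZS [Fintype G] {U : Multiset G} (hU : IsMinZS U) :
    U.card ≤ Fintype.card G := by
  classical
  obtain ⟨L, hL⟩ : ∃ L : List G, (L : Multiset G) = U := ⟨U.toList, U.coe_toList⟩
  have hlen : L.length = U.card := by rw [← hL]; simp
  rw [← hlen]
  set n := L.length with hn
  have key : ∀ i j : Fin n, (i : ℕ) < (j : ℕ) →
      (L.take ((i:ℕ)+1)).sum ≠ (L.take ((j:ℕ)+1)).sum := by
    intro i j hij heq
    set S : List G := (L.drop ((i:ℕ)+1)).take ((j:ℕ) - (i:ℕ)) with hS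
    have htake : L.take ((j:ℕ)+1) = L.take ((i:ℕ)+1) ++ S := by
      rw [hS, ← List.take_add]
      congr 1
      omega
    have hsumS : S.sum = 0 := by
      have h2 := congrArg List.sum htake
      rw [List.sum_append, ← heq] at h2
      exact (left_eq_add.mp h2)
    have hSlen : S.length = (j:ℕ) - (i:ℕ) := by
      rw [hS, List.length_take, List.length_drop]
      have := j.isLt
      omega
    have hSle : (S : Multiset G) ≤ U := by
      rw [← hL]
      have e1 : (L.take ((j:ℕ)+1) : Multiset G) = ↑(L.take ((i:ℕ)+1)) + ↑S := by
        rw [htake]; rfl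
      have e2 : (L : Multiset G) = ↑(L.take ((j:ℕ)+1)) + ↑(L.drop ((j:ℕ)+1)) := by
        conv_lhs => rw [← List.take_append_drop ((j:ℕ)+1) L]
        rfl
      calc (S : Multiset G) ≤ (L.take ((j:ℕ)+1) : Multiset G) := by
            rw [e1]; exact Multiset.le_add_left _ _
        _ ≤ (L : Multiset G) := by
            rw [e2]; exact Multiset.le_add_right _ _
    have hSne : (S : Multiset G) ≠ 0 := by
      rw [← Multiset.card_pos]
      simp [hSlen]
      omega
    have := hU.2.2 _ hSle hSne (by simpa using hsumS)
    have hcards := congrArg Multiset.card this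
    simp [hSlen, ← hL] at hcards
    have := j.isLt
    omega
  have hinj : Function.Injective (fun i : Fin n => (L.take ((i:ℕ)+1)).sum) := by
    intro i j hij
    by_contra hne
    rcases Nat.lt_or_ge (i : ℕ) (j : ℕ) with h | h
    · exact key i j h hij
    · have : (j : ℕ) < (i : ℕ) := by
        rcases Nat.lt_or_ge (j:ℕ) (i:ℕ) with h' | h'
        · exact h'
        · exact absurd (Fin.ext (le_antisymm h' h)) hne
      exact key j i this hij.symm
  simpa using Fintype.card_le_of_injective _ hinj

end bound

section dav
variable {G : Type*} [AddCommGroup G] [Fintype G]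

lemma davSet_bddAbove : BddAbove {n | ∃ U : Multiset G, IsMinZS U ∧ U.card = n} := by
  refine ⟨Fintype.card G, fun n hn => ?_⟩
  rcases hn with ⟨U, hU, rfl⟩
  exact card_le_card_of_minZS hU

lemma card_le_DavC {U : Multiset G} (hU : IsMinZS U) : U.card ≤ DavC G :=
  le_csSup davSet_bddAbove ⟨U, hU, rfl⟩

lemma three_le_DavC (hcard : 3 ≤ Fintype.card G) : 3 ≤ DavC G := by
  classical
  suffices h : ∃ U : Multiset G, IsMinZS U ∧ U.card = 3 by
    rcases h with ⟨U, hU, hc⟩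
    calc 3 = U.card := hc.symm
      _ ≤ DavC G := card_le_DavC hU
  by_cases h : ∃ g : G, g ≠ 0 ∧ g + g ≠ 0
  · rcases h with ⟨g, hg, hg2⟩
    refine ⟨{g, g, -(g+g)}, minZS_triple _ _ _ (by abel) hg hg (neg_ne_zero.mpr hg2) hg2 ?_ ?_, by simp⟩
    · intro hcon
      apply hg
      have : g + -(g + g) = -g := by abel
      rw [this] at hcon
      simpa using hcon
    · intro hcon
      apply hg
      have : g + -(g + g) = -g := by abel
      rw [this] at hcon
      simpa using hcon
  · push_neg at h
    have h2 : ∀ g : G, g + g = 0 := by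
      intro g
      by_cases hg : g = 0
      · simp [hg]
      · exact h g hg
    obtain ⟨g, hg⟩ : ∃ g : G, g ≠ 0 := Fintype.exists_ne_of_one_lt_card (by omega) 0
    obtain ⟨k, hk⟩ : ∃ k : G, k ∉ ({0, g} : Finset G) := by
      by_contra hcon
      push_neg at hcon
      have : (Finset.univ : Finset G) ⊆ {0, g} := fun x _ => hcon x
      have := Finset.card_le_card this
      have h01 : ({0, g} : Finset G).card ≤ 2 := Finset.card_insert_le _ _ |>.trans (by simp)
      simp at this
      omega
    simp only [Finset.mem_insert, Finset.mem_singleton, not_or] at hk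
    obtain ⟨hk0, hkg⟩ := hk
    have hneg : ∀ x : G, -x = x := fun x => neg_eq_of_add_eq_zero_right (h2 x)
    have hgk : g + k ≠ 0 := by
      intro hcon
      apply hkg
      have : k = -g := eq_neg_of_add_eq_zero_right hcon
      rw [hneg] at this
      exact this
    refine ⟨{g, k, g + k}, minZS_triple _ _ _ ?_ hg hk0 hgk hgk ?_ ?_, by simp⟩
    · have e : g + k + (g + k) = (g + g) + (k + k) := by abel
      rw [e, h2, h2, add_zero]
    · have e : g + (g + k) = (g + g) + k := by abel
      rw [e, h2, zero_add]
      exact hk0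
    · have e : k + (g + k) = g + (k + k) := by abel
      rw [e, h2, add_zero]
      exact hg
end dav

section fact
variable {G : Type*} [AddCommGroup G]

lemma exists_minZS_le (A : Multiset G) (hA : A.sum = 0) (h0 : A ≠ 0) :
    ∃ V ≤ A, IsMinZS V := by
  classical
  have hex : ∃ n, ∃ V : Multiset G, V ≤ A ∧ V ≠ 0 ∧ V.sum = 0 ∧ V.card = n :=
    ⟨A.card, A, le_refl _, h0, hA, rfl⟩
  obtain ⟨V, hVle, hVne, hVs, hVc⟩ := Nat.find_spec hex
  refine ⟨V, hVle, hVne, hVs, fun W hWle hWne hWs => ?_⟩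
  have : Nat.find hex ≤ W.card := Nat.find_le ⟨W, hWle.trans hVle, hWne, hWs, rfl⟩
  exact Multiset.eq_of_le_of_card_le hWle (by omega)

lemma exists_factorization (A : Multiset G) (hA : A.sum = 0) :
    ∃ l : Multiset (Multiset G), (∀ U ∈ l, IsMinZS U) ∧ l.sum = A := by
  classical
  induction A using Multiset.strongInductionOn with
  | ih A ih =>
    by_cases h0 : A = 0
    · exact ⟨0, by simp, by simp [h0]⟩
    · obtain ⟨V, hVle, hV⟩ := exists_minZS_le A hA h0
      have hsub : A - V + V = A := tsub_add_cancel_of_le hVle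
      have hcd : (A - V).card + V.card = A.card := by
        rw [← Multiset.card_add, hsub]
      have hlt : A - V < A := by
        refine lt_of_le_of_ne tsub_le_self (fun e => ?_)
        have := card_pos_of_minZS hV
        rw [e] at hcd
        omega
      have hsum : (A - V).sum = 0 := by
        have := congrArg Multiset.sum hsub
        rw [Multiset.sum_add, hV.2.1, add_zero] at this
        rw [this, hA]
      obtain ⟨l, hl1, hl2⟩ := ih (A - V) hlt hsum
      exact ⟨V ::ₘ l, by
        intro U hU
        rcases Multiset.mem_cons.1 hU with rfl | hU
        · exact hV
        · exact hl1 U hU, by rw [Multiset.sum_cons, hl2]; rw [add_comm]; exact hsub⟩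

lemma count_zero_factorization [DecidableEq G] (l : Multiset (Multiset G))
    (h : ∀ U ∈ l, IsMinZS U) :
    Multiset.count ({0} : Multiset G) l = Multiset.count (0 : G) l.sum := by
  induction l using Multiset.induction_on with
  | empty => simp
  | cons U l ih =>
    have hU := h U (Multiset.mem_cons_self _ _)
    have ih' := ih (fun V hV => h V (Multiset.mem_cons_of_mem hV))
    rw [Multiset.sum_cons, Multiset.count_cons, Multiset.count_add, ih']
    have hcU : (if ({0} : Multiset G) = U then 1 else 0) = Multiset.count (0:G) U := by
      by_cases h0 : (0 : G) ∈ U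
      · rw [minZS_of_zero_mem hU h0]
        simp
      · rw [Multiset.count_eq_zero.2 h0, if_neg (fun e => h0 (by rw [← e]; simp))]
    omega

lemma key_ineq [Fintype G] [DecidableEq G] (l : Multiset (Multiset G))
    (h : ∀ U ∈ l, IsMinZS U) :
    2 * l.card ≤ l.sum.card + l.count ({0} : Multiset G) ∧
    l.sum.card + DavC G * l.count ({0} : Multiset G) ≤
      DavC G * l.card + l.count ({0} : Multiset G) := by
  induction l using Multiset.induction_on with
  | empty => simp
  | cons U l ih =>
    have hU := h U (Multiset.mem_cons_self _ _)
    obtain ⟨ih1, ih2⟩ := ih (fun V hV => h V (Multiset.mem_cons_of_mem hV))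
    have hUD : U.card ≤ DavC G := card_le_DavC hU
    rw [Multiset.sum_cons, Multiset.card_cons, Multiset.card_add, Multiset.count_cons]
    by_cases hU0 : U = ({0} : Multiset G)
    · have h1 : DavC G * (l.card + 1) = DavC G * l.card + DavC G := by ring
      have h2 : DavC G * (l.count ({0} : Multiset G) + 1)
          = DavC G * l.count ({0} : Multiset G) + DavC G := by ring
      simp only [hU0, if_pos rfl, Multiset.card_singleton, if_true, eq_self_iff_true]
      constructor <;> omega
    · have hc2 : 2 ≤ U.card := two_le_card_of_minZS hU hU0
      rw [if_neg (fun e => hU0 e.symm), add_zero]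
      have h1 : DavC G * (l.card + 1) = DavC G * l.card + DavC G := by ring
      constructor <;> omega

lemma all_eq_of_forall_le_of_sum_ge (s : Multiset ℕ) (a : ℕ) (h : ∀ x ∈ s, a ≤ x)
    (hs : s.sum ≤ a * s.card) : ∀ x ∈ s, x = a := by
  induction s using Multiset.induction_on with
  | empty => simp
  | cons x s ih =>
    have hx := h x (Multiset.mem_cons_self _ _)
    have hrest : ∀ y ∈ s, a ≤ y := fun y hy => h y (Multiset.mem_cons_of_mem hy)
    have hlow : s.card * a ≤ s.sum := Multiset.card_nsmul_le_sum hrest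
    rw [Multiset.sum_cons, Multiset.card_cons] at hs
    have ha : a * (s.card + 1) = a * s.card + a := by ring
    intro y hy
    rcases Multiset.mem_cons.1 hy with rfl | hy
    · have : y ≤ a := by nlinarith [Nat.mul_comm s.card a]
      omega
    · exact ih hrest (by nlinarith [Nat.mul_comm s.card a]) y hy

lemma all_eq_of_forall_ge_of_sum_le (s : Multiset ℕ) (a : ℕ) (h : ∀ x ∈ s, x ≤ a)
    (hs : a * s.card ≤ s.sum) : ∀ x ∈ s, x = a := by
  induction s using Multiset.induction_on with
  | empty => simp
  | cons x s ih =>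
    have hx := h x (Multiset.mem_cons_self _ _)
    have hrest : ∀ y ∈ s, y ≤ a := fun y hy => h y (Multiset.mem_cons_of_mem hy)
    have hhigh : s.sum ≤ s.card * a := Multiset.sum_le_card_nsmul s a hrest
    rw [Multiset.sum_cons, Multiset.card_cons] at hs
    intro y hy
    rcases Multiset.mem_cons.1 hy with rfl | hy
    · have ha : a * (s.card + 1) = a * s.card + a := by ring
      have : a ≤ y := by nlinarith [Nat.mul_comm s.card a]
      omega
    · refine ih hrest ?_ y hy
      have ha : a * (s.card + 1) = a * s.card + a := by ring
      nlinarith [Nat.mul_comm s.card a]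

lemma LSet_nonempty (A : Multiset G) (hA : A.sum = 0) : (LSet A).Nonempty := by
  obtain ⟨l, h1, h2⟩ := exists_factorization A hA
  exact ⟨l.card, l, rfl, h1, h2⟩

lemma LSet_bddAbove (A : Multiset G) : BddAbove (LSet A) := by
  refine ⟨A.card, fun k hk => ?_⟩
  rcases hk with ⟨l, rfl, hmin, rfl⟩
  rw [card_sum_eq]
  calc l.card = (l.map Multiset.card).card * 1 := by simp
    _ ≤ (l.map Multiset.card).sum := by
        rw [← smul_eq_mul]
        apply Multiset.card_nsmul_le_sum
        intro x hx
        rcases Multiset.mem_map.1 hx with ⟨U, hU, rfl⟩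
        exact card_pos_of_minZS (hmin U hU)
end fact

theorem stmt1 {G : Type*} [AddCommGroup G] [Fintype G] (hcard : 3 ≤ Fintype.card G)
    (A : Multiset G) (hA : A.sum = 0) :
    rhoSet (LSet A) = (DavC G : ℚ) / 2 ↔
      ∃ (k l : ℕ), 0 < k ∧ 0 < l ∧
        ∃ (U : Fin k → Multiset G) (V : Fin l → Multiset G),
          (∀ i, IsMinZS (U i) ∧ (U i).card = DavC G) ∧
          (∀ j, IsMinZS (V j) ∧ (V j).card = 2) ∧
          A = ∑ i, U i ∧ A = ∑ j, V j := by
  classical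
  have hD3 : 3 ≤ DavC G := three_le_DavC hcard
  have hne : (LSet A).Nonempty := LSet_nonempty A hA
  have hbdd : BddAbove (LSet A) := LSet_bddAbove A
  have hMmem : sSup (LSet A) ∈ LSet A := Nat.sSup_mem hne hbdd
  have hmmem : sInf (LSet A) ∈ LSet A := Nat.sInf_mem hne
  constructor
  · intro h
    obtain ⟨lm, hlmc, hlmmin, hlmsum⟩ := hmmem
    obtain ⟨lM, hlMc, hlMmin, hlMsum⟩ := hMmem
    have hsm : lm.count ({0} : Multiset G) = A.count 0 := by
      rw [count_zero_factorization lm hlmmin, hlmsum]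
    have hsM : lM.count ({0} : Multiset G) = A.count 0 := by
      rw [count_zero_factorization lM hlMmin, hlMsum]
    have k1 := (key_ineq lM hlMmin).1
    have k2 := (key_ineq lm hlmmin).2
    rw [hlMsum, hlMc, hsM] at k1
    rw [hlmsum, hlmc, hsm] at k2
    by_cases hm0 : sInf (LSet A) = 0
    · exfalso
      have hA0 : A = 0 := by
        rw [← hlmsum, Multiset.card_eq_zero.1 (hlmc.trans hm0), Multiset.sum_zero]
      have hM0 : sSup (LSet A) = 0 := by
        have hAc : A.card = 0 := by rw [hA0]; simp
        have hAcnt : A.count 0 = 0 := by rw [hA0]; simp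
        omega
      simp only [rhoSet, hM0, hm0, Nat.cast_zero, zero_div] at h
      have hq : (DavC G : ℚ) = 0 := by linarith
      have : DavC G = 0 := by exact_mod_cast hq
      omega
    · have hmQ : ((sInf (LSet A) : ℕ) : ℚ) ≠ 0 := Nat.cast_ne_zero.2 hm0
      simp only [rhoSet] at h
      rw [div_eq_div_iff hmQ two_ne_zero] at h
      have hMm : 2 * sSup (LSet A) = DavC G * sInf (LSet A) := by
        have : (2 * sSup (LSet A) : ℚ) = (DavC G * sInf (LSet A) : ℚ) := by
          push_cast
          linarith
        exact_mod_cast this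
      have h3s : 3 * A.count 0 ≤ DavC G * A.count 0 :=
        Nat.mul_le_mul_right _ hD3
    -- derive s = 0 and equalities
      have hs0 : A.count 0 = 0 := by omega
      rw [hs0] at k1 k2
      simp only [add_zero, mul_zero] at k1 k2
      have hcardA : A.card = 2 * sSup (LSet A) := by omega
      have hcardA' : A.card = DavC G * sInf (LSet A) := by omega
      have hzero_notmem : ∀ l' : Multiset (Multiset G), l'.count ({0} : Multiset G) = A.count 0 →
          ({0} : Multiset G) ∉ l' := by
        intro l' hcount hmem
        rw [hs0] at hcount
        exact absurd (Multiset.count_eq_zero.1 hcount) (fun h' => h' hmem)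
      have hallD : ∀ U ∈ lm, Multiset.card U = DavC G := by
        intro U hU
        have := all_eq_of_forall_ge_of_sum_le (lm.map Multiset.card) (DavC G)
          (fun x hx => by
            rcases Multiset.mem_map.1 hx with ⟨W, hW, rfl⟩
            exact card_le_DavC (hlmmin W hW))
          (by
            have e : (lm.map Multiset.card).sum = A.card := by rw [← card_sum_eq, hlmsum]
            rw [e]
            simp only [Multiset.card_map, hlmc]
            omega)
        exact this _ (Multiset.mem_map_of_mem _ hU)
      have hall2 : ∀ U ∈ lM, Multiset.card U = 2 := by
        intro U hU
        have := all_eq_of_forall_le_of_sum_ge (lM.map Multiset.card) 2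
          (fun x hx => by
            rcases Multiset.mem_map.1 hx with ⟨W, hW, rfl⟩
            refine two_le_card_of_minZS (hlMmin W hW) (fun e => ?_)
            exact hzero_notmem lM hsM (e ▸ hW))
          (by
            have e : (lM.map Multiset.card).sum = A.card := by rw [← card_sum_eq, hlMsum]
            rw [e]
            simp only [Multiset.card_map, hlMc]
            omega)
        exact this _ (Multiset.mem_map_of_mem _ hU)
      refine ⟨lm.toList.length, lM.toList.length, ?_, ?_,
        fun i => lm.toList.get i, fun j => lM.toList.get j, ?_, ?_, ?_, ?_⟩
      · rw [Multiset.length_toList, hlmc]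
        omega
      · rw [Multiset.length_toList, hlMc]
        have h1 : DavC G * 1 ≤ DavC G * sInf (LSet A) := Nat.mul_le_mul_left _ (by omega)
        omega
      · intro i
        have hmem : lm.toList.get i ∈ lm := by
          rw [← Multiset.mem_toList]
          exact List.get_mem _ _
        exact ⟨hlmmin _ hmem, hallD _ hmem⟩
      · intro j
        have hmem : lM.toList.get j ∈ lM := by
          rw [← Multiset.mem_toList]
          exact List.get_mem _ _
        exact ⟨hlMmin _ hmem, hall2 _ hmem⟩
      · simp only [List.get_eq_getElem]
        rw [Fin.sum_univ_getElem, Multiset.sum_toList, hlmsum]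
      · simp only [List.get_eq_getElem]
        rw [Fin.sum_univ_getElem, Multiset.sum_toList, hlMsum]
  · rintro ⟨k, l, hk, hl, U, V, hU, hV, hAU, hAV⟩
    have hkmem : k ∈ LSet A := by
      refine ⟨(List.ofFn U : List (Multiset G)), by simp, ?_, ?_⟩
      · intro W hW
        rcases List.mem_ofFn.1 (by exact_mod_cast hW) with ⟨i, rfl⟩
        exact (hU i).1
      · rw [Multiset.sum_coe, List.sum_ofFn]
        exact hAU.symm
    have hlmem : l ∈ LSet A := by
      refine ⟨(List.ofFn V : List (Multiset G)), by simp, ?_, ?_⟩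
      · intro W hW
        rcases List.mem_ofFn.1 (by exact_mod_cast hW) with ⟨j, rfl⟩
        exact (hV j).1
      · rw [Multiset.sum_coe, List.sum_ofFn]
        exact hAV.symm
    have hcardU : A.card = DavC G * k := by
      have e : A = (↑(List.ofFn U) : Multiset (Multiset G)).sum := by
        rw [Multiset.sum_coe, List.sum_ofFn]; exact hAU
      rw [e, card_sum_eq]
      simp only [Multiset.map_coe, List.map_ofFn, Multiset.sum_coe, List.sum_ofFn]
      simp [Function.comp, (hU _).2, Finset.sum_const, mul_comm]
    have hcardV : A.card = 2 * l := by
      have e : A = (↑(List.ofFn V) : Multiset (Multiset G)).sum := by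
        rw [Multiset.sum_coe, List.sum_ofFn]; exact hAV
      rw [e, card_sum_eq]
      simp only [Multiset.map_coe, List.map_ofFn, Multiset.sum_coe, List.sum_ofFn]
      simp [Function.comp, (hV _).2, Finset.sum_const, mul_comm]
    have h0A : (0 : G) ∉ A := by
      intro h0
      rw [hAV] at h0
      rcases Multiset.mem_sum.1 h0 with ⟨j, _, hj⟩
      have := minZS_of_zero_mem (hV j).1 hj
      have hc := (hV j).2
      rw [this] at hc
      simp at hc
    have hs0 : A.count 0 = 0 := Multiset.count_eq_zero.2 h0A
    have hub : ∀ k' ∈ LSet A, k' ≤ l := by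
      rintro k' ⟨l', rfl, hmin', hsum'⟩
      have := (key_ineq l' hmin').1
      rw [hsum', count_zero_factorization l' hmin', hsum', hs0] at this
      omega
    have hlb : ∀ k' ∈ LSet A, k ≤ k' := by
      rintro k' ⟨l', rfl, hmin', hsum'⟩
      have := (key_ineq l' hmin').2
      rw [hsum', count_zero_factorization l' hmin', hsum', hs0] at this
      simp only [add_zero, mul_zero] at this
      have hDk : DavC G * k ≤ DavC G * l'.card := by omega
      exact Nat.le_of_mul_le_mul_left hDk (by omega)
    have hsup : sSup (LSet A) = l := le_antisymm (csSup_le hne hub) (le_csSup hbdd hlmem)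
    have hinf : sInf (LSet A) = k := le_antisymm (Nat.sInf_le hkmem) (le_csInf hne hlb)
    simp only [rhoSet, hsup, hinf]
    rw [div_eq_div_iff (Nat.cast_ne_zero.2 (by omega)) two_ne_zero]
    have h2 : 2 * l = DavC G * k := by omega
    have h3 : ((2 * l : ℕ) : ℚ) = ((DavC G * k : ℕ) : ℚ) := by exact_mod_cast h2
    push_cast at h3 ⊢
    linarith
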